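/- Let f and g be probability density functions on ℝ^d with ∫ |x|² (f(x)+g(x)) dx < ∞, and let μ(dx) = f(x)dx, ν(dx) = g(x)dx. Then there exists a constant C (depending only on d) such that W₂(μ,ν)² ≤ C ∫_{ℝ^d} |x|² |f(x) − g(x)| dx. -/

import Mathlib

open MeasureTheory

/-- The squared 2-Wasserstein distance between two measures on a normed space,
defined as the infimum of `∫ |x−y|² dγ` over all couplings `γ`. -/
noncomputable def W2sq {E : Type*} [MeasurableSpace E] [NormedAddCommGroup E]
    (μ ν : Measure E) : ℝ :=
  sInf {r : ℝ | ∃ γ : Measure (E × E), IsProbabilityMeasure γ ∧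
    γ.map Prod.fst = μ ∧ γ.map Prod.snd = ν ∧ r = ∫ p, ‖p.1 - p.2‖ ^ 2 ∂γ}

/-- Density coupling lemma (Lemma 3.3, Horowitz–Karandikar): there is a constant `C`
depending only on the dimension such that for all probability densities `f, g` on `ℝ^d`
with finite second moments, `W₂(f dx, g dx)² ≤ C ∫ |x|² |f(x) − g(x)| dx`. -/
theorem stmt_4 (d : ℕ) :
    ∃ C : ℝ, ∀ f g : EuclideanSpace ℝ (Fin d) → ℝ,
      Measurable f → Measurable g → (∀ x, 0 ≤ f x) → (∀ x, 0 ≤ g x) →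
      (∫ x, f x) = 1 → (∫ x, g x) = 1 →
      Integrable (fun x => ‖x‖ ^ 2 * (f x + g x)) →
      W2sq (volume.withDensity (fun x => ENNReal.ofReal (f x)))
          (volume.withDensity (fun x => ENNReal.ofReal (g x)))
        ≤ C * ∫ x, ‖x‖ ^ 2 * |f x - g x| := by
  classical
  refine ⟨2, fun f g hfm hgm hf0 hg0 hf1 hg1 hmom => ?_⟩
  set μ : Measure (EuclideanSpace ℝ (Fin d)) := volume.withDensity (fun x => ENNReal.ofReal (f x)) with hμdef
  set ν : Measure (EuclideanSpace ℝ (Fin d)) := volume.withDensity (fun x => ENNReal.ofReal (g x)) with hνdef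
  -- basic integrability
  have hfint : Integrable f (volume : Measure (EuclideanSpace ℝ (Fin d))) := by
    by_contra hc
    rw [integral_undef hc] at hf1; norm_num at hf1
  have hgint : Integrable g (volume : Measure (EuclideanSpace ℝ (Fin d))) := by
    by_contra hc
    rw [integral_undef hc] at hg1; norm_num at hg1
  -- the minimum h and the residuals φ, ψ
  set h : EuclideanSpace ℝ (Fin d) → ℝ := fun x => min (f x) (g x) with hhdef
  have hhm : Measurable h := hfm.min hgm
  have hh0 : ∀ x, 0 ≤ h x := fun x => le_min (hf0 x) (hg0 x)
  have hhint : Integrable h (volume : Measure (EuclideanSpace ℝ (Fin d))) := by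
    refine hfint.mono hhm.aestronglyMeasurable (ae_of_all _ fun x => ?_)
    rw [Real.norm_eq_abs, Real.norm_eq_abs, abs_of_nonneg (hh0 x), abs_of_nonneg (hf0 x)]
    exact min_le_left _ _
  set φ : EuclideanSpace ℝ (Fin d) → ℝ := fun x => f x - h x with hφdef
  set ψ : EuclideanSpace ℝ (Fin d) → ℝ := fun x => g x - h x with hψdef
  have hφm : Measurable φ := hfm.sub hhm
  have hψm : Measurable ψ := hgm.sub hhm
  have hφ0 : ∀ x, 0 ≤ φ x := fun x => sub_nonneg.2 (min_le_left _ _)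
  have hψ0 : ∀ x, 0 ≤ ψ x := fun x => sub_nonneg.2 (min_le_right _ _)
  have hφint : Integrable φ (volume : Measure (EuclideanSpace ℝ (Fin d))) := hfint.sub hhint
  have hψint : Integrable ψ (volume : Measure (EuclideanSpace ℝ (Fin d))) := hgint.sub hhint
  have key : ∀ x, φ x + ψ x = |f x - g x| := by
    intro x
    rcases le_total (f x) (g x) with hle | hle
    · rw [abs_of_nonpos (sub_nonpos.2 hle)]
      simp only [hφdef, hψdef, hhdef, min_eq_left hle]
      ring
    · rw [abs_of_nonneg (sub_nonneg.2 hle)]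
      simp only [hφdef, hψdef, hhdef, min_eq_right hle]
      ring
  -- moment integrability
  have hdom : ∀ k : EuclideanSpace ℝ (Fin d) → ℝ, Measurable k → (∀ x, 0 ≤ k x) → (∀ x, k x ≤ f x + g x) →
      Integrable (fun x => 2 * ‖x‖ ^ 2 * k x) (volume : Measure (EuclideanSpace ℝ (Fin d))) := by
    intro k hk hk0 hkle
    refine (hmom.const_mul 2).mono
      ((measurable_const.mul (measurable_id.norm.pow_const 2)).mul hk).aestronglyMeasurable
      (ae_of_all _ fun x => ?_)
    have h1 : (0:ℝ) ≤ ‖x‖ ^ 2 := sq_nonneg _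
    have h2 : (0:ℝ) ≤ 2 * ‖x‖ ^ 2 * k x := mul_nonneg (by positivity) (hk0 x)
    have h3 : (0:ℝ) ≤ 2 * (‖x‖ ^ 2 * (f x + g x)) :=
      mul_nonneg (by norm_num) (mul_nonneg h1 (by nlinarith [hf0 x, hg0 x]))
    rw [Real.norm_eq_abs, Real.norm_eq_abs, abs_of_nonneg h2, abs_of_nonneg h3]
    nlinarith [hkle x, hk0 x]
  have hφle : ∀ x, φ x ≤ f x + g x := fun x => by
    have := hh0 x; have := hg0 x
    simp only [hφdef]; linarith
  have hψle : ∀ x, ψ x ≤ f x + g x := fun x => by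
    have := hh0 x; have := hf0 x
    simp only [hψdef]; linarith
  have hAint : Integrable (fun x => 2 * ‖x‖ ^ 2 * φ x) (volume : Measure (EuclideanSpace ℝ (Fin d))) :=
    hdom φ hφm hφ0 hφle
  have hBint : Integrable (fun x => 2 * ‖x‖ ^ 2 * ψ x) (volume : Measure (EuclideanSpace ℝ (Fin d))) :=
    hdom ψ hψm hψ0 hψle
  -- nonnegativity of the right-hand side
  have hRHS0 : 0 ≤ ∫ x, ‖x‖ ^ 2 * |f x - g x| :=
    integral_nonneg fun x => mul_nonneg (sq_nonneg _) (abs_nonneg _)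
  -- mass bookkeeping
  set s : ℝ := ∫ x, φ x with hsdef
  have hs0 : 0 ≤ s := integral_nonneg hφ0
  have hφs : (∫ x, φ x) = s := rfl
  have hψs : (∫ x, ψ x) = s := by
    rw [hsdef]
    simp only [hφdef, hψdef]
    rw [integral_sub hgint hhint, integral_sub hfint hhint, hf1, hg1]
  set m : ℝ := ∫ x, h x with hmdef
  have hm0 : 0 ≤ m := integral_nonneg hh0
  have hms : m + s = 1 := by
    rw [hsdef, hmdef]
    simp only [hφdef]
    rw [integral_sub hfint hhint, hf1]; ring
  have hdiag : Measurable (fun x : EuclideanSpace ℝ (Fin d) => (x, x)) := measurable_id.prodMk measurable_id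
  have hcont : Continuous (fun p : EuclideanSpace ℝ (Fin d) × EuclideanSpace ℝ (Fin d) => ‖p.1 - p.2‖ ^ 2) :=
    ((continuous_fst.sub continuous_snd).norm).pow 2
  -- the main coupling construction
  have main : ∃ γ : Measure (EuclideanSpace ℝ (Fin d) × EuclideanSpace ℝ (Fin d)), IsProbabilityMeasure γ ∧
      γ.map Prod.fst = μ ∧ γ.map Prod.snd = ν ∧
      (∫ p, ‖p.1 - p.2‖ ^ 2 ∂γ) ≤ 2 * ∫ x, ‖x‖ ^ 2 * |f x - g x| := by
    rcases eq_or_lt_of_le hs0 with hs | hs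
    · -- s = 0 : f = g a.e., diagonal coupling
      have hφae : φ =ᵐ[(volume : Measure (EuclideanSpace ℝ (Fin d)))] 0 :=
        (integral_eq_zero_iff_of_nonneg hφ0 hφint).1 hs.symm
      have hψae : ψ =ᵐ[(volume : Measure (EuclideanSpace ℝ (Fin d)))] 0 :=
        (integral_eq_zero_iff_of_nonneg hψ0 hψint).1 (hψs.trans hs.symm)
      have hμν : μ = ν := by
        rw [hμdef, hνdef]
        refine withDensity_congr_ae ?_
        filter_upwards [hφae, hψae] with x h1 h2
        have h1' : f x - h x = 0 := h1
        have h2' : g x - h x = 0 := h2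
        have : f x = g x := by linarith
        rw [this]
      have hμprob : IsProbabilityMeasure μ := by
        constructor
        rw [hμdef, withDensity_apply _ MeasurableSet.univ, setLIntegral_univ,
          ← ofReal_integral_eq_lintegral_ofReal hfint (ae_of_all _ hf0), hf1,
          ENNReal.ofReal_one]
      refine ⟨μ.map (fun x => (x, x)), Measure.isProbabilityMeasure_map hdiag.aemeasurable, ?_, ?_, ?_⟩
      · rw [Measure.map_map measurable_fst hdiag]
        exact Measure.map_id
      · rw [Measure.map_map measurable_snd hdiag, ← hμν]
        exact Measure.map_id
      · rw [integral_map hdiag.aemeasurable hcont.aestronglyMeasurable]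
        simp [hRHS0]
    · -- s > 0 : mixture coupling
      set μ₀ : Measure (EuclideanSpace ℝ (Fin d)) := volume.withDensity (fun x => ENNReal.ofReal (h x)) with hμ₀def
      set μ₁ : Measure (EuclideanSpace ℝ (Fin d)) := volume.withDensity (fun x => ENNReal.ofReal (φ x)) with hμ₁def
      set ν₁ : Measure (EuclideanSpace ℝ (Fin d)) := volume.withDensity (fun x => ENNReal.ofReal (ψ x)) with hν₁def
      have hμ₀univ : μ₀ Set.univ = ENNReal.ofReal m := by
        rw [hμ₀def, withDensity_apply _ MeasurableSet.univ, setLIntegral_univ,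
          ← ofReal_integral_eq_lintegral_ofReal hhint (ae_of_all _ hh0), hmdef]
      have hμ₁univ : μ₁ Set.univ = ENNReal.ofReal s := by
        rw [hμ₁def, withDensity_apply _ MeasurableSet.univ, setLIntegral_univ,
          ← ofReal_integral_eq_lintegral_ofReal hφint (ae_of_all _ hφ0), hφs]
      have hν₁univ : ν₁ Set.univ = ENNReal.ofReal s := by
        rw [hν₁def, withDensity_apply _ MeasurableSet.univ, setLIntegral_univ,
          ← ofReal_integral_eq_lintegral_ofReal hψint (ae_of_all _ hψ0), hψs]
      haveI : IsFiniteMeasure μ₁ := ⟨by rw [hμ₁univ]; exact ENNReal.ofReal_lt_top⟩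
      haveI : IsFiniteMeasure ν₁ := ⟨by rw [hν₁univ]; exact ENNReal.ofReal_lt_top⟩
      have hsne : ENNReal.ofReal s ≠ 0 := (ENNReal.ofReal_pos.2 hs).ne'
      set c : ENNReal := (ENNReal.ofReal s)⁻¹ with hcdef
      set γ : Measure (EuclideanSpace ℝ (Fin d) × EuclideanSpace ℝ (Fin d)) := μ₀.map (fun x => (x, x)) + c • (μ₁.prod ν₁) with hγdef
      have hγprob : IsProbabilityMeasure γ := by
        constructor
        rw [hγdef, Measure.add_apply, Measure.smul_apply, smul_eq_mul,
          Measure.map_apply hdiag MeasurableSet.univ, Set.preimage_univ, hμ₀univ,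
          ← Set.univ_prod_univ, Measure.prod_prod, hμ₁univ, hν₁univ, hcdef,
          ← mul_assoc, ENNReal.inv_mul_cancel hsne ENNReal.ofReal_ne_top, one_mul,
          ← ENNReal.ofReal_add hm0 hs0, hms, ENNReal.ofReal_one]
      have hsum_f : μ₀ + μ₁ = μ := by
        rw [hμ₀def, hμ₁def, hμdef, ← withDensity_add_left hhm.ennreal_ofReal]
        congr 1
        funext x
        rw [Pi.add_apply, ← ENNReal.ofReal_add (hh0 x) (hφ0 x)]
        congr 1
        simp only [hφdef]; ring
      have hsum_g : μ₀ + ν₁ = ν := by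
        rw [hμ₀def, hν₁def, hνdef, ← withDensity_add_left hhm.ennreal_ofReal]
        congr 1
        funext x
        rw [Pi.add_apply, ← ENNReal.ofReal_add (hh0 x) (hψ0 x)]
        congr 1
        simp only [hψdef]; ring
      have hfst : γ.map Prod.fst = μ := by
        rw [hγdef, Measure.map_add _ _ measurable_fst, Measure.map_smul,
          Measure.map_map measurable_fst hdiag, Measure.map_fst_prod, hν₁univ,
          smul_smul, hcdef, ENNReal.inv_mul_cancel hsne ENNReal.ofReal_ne_top, one_smul]
        have : ((Prod.fst : _ × _ → EuclideanSpace ℝ (Fin d)) ∘ fun x => (x, x)) = id := rfl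
        rw [this, Measure.map_id, hsum_f]
      have hsnd : γ.map Prod.snd = ν := by
        rw [hγdef, Measure.map_add _ _ measurable_snd, Measure.map_smul,
          Measure.map_map measurable_snd hdiag, Measure.map_snd_prod, hμ₁univ,
          smul_smul, hcdef, ENNReal.inv_mul_cancel hsne ENNReal.ofReal_ne_top, one_smul]
        have : ((Prod.snd : _ × _ → EuclideanSpace ℝ (Fin d)) ∘ fun x => (x, x)) = id := rfl
        rw [this, Measure.map_id, hsum_g]
      refine ⟨γ, hγprob, hfst, hsnd, ?_⟩
      -- the cost estimate
      set F : EuclideanSpace ℝ (Fin d) × EuclideanSpace ℝ (Fin d) → ENNReal := fun p => ENNReal.ofReal (‖p.1 - p.2‖ ^ 2) with hFdef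
      have hFm : Measurable F :=
        (((measurable_fst.sub measurable_snd).norm).pow_const 2).ennreal_ofReal
      set Φ : EuclideanSpace ℝ (Fin d) → ENNReal := fun x => ENNReal.ofReal (2 * ‖x‖ ^ 2) with hΦdef
      have hΦm : Measurable Φ :=
        ((measurable_id.norm.pow_const 2).const_mul 2).ennreal_ofReal
      set A : ℝ := ∫ x, 2 * ‖x‖ ^ 2 * φ x with hAdef
      set B : ℝ := ∫ x, 2 * ‖x‖ ^ 2 * ψ x with hBdef
      have hA0 : 0 ≤ A := integral_nonneg fun x => mul_nonneg (by positivity) (hφ0 x)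
      have hB0 : 0 ≤ B := integral_nonneg fun x => mul_nonneg (by positivity) (hψ0 x)
      have hΦμ₁ : ∫⁻ x, Φ x ∂μ₁ = ENNReal.ofReal A := by
        rw [hμ₁def, lintegral_withDensity_eq_lintegral_mul _ hφm.ennreal_ofReal hΦm]
        have hpt : ∀ x, ((fun x => ENNReal.ofReal (φ x)) * Φ) x
            = ENNReal.ofReal (2 * ‖x‖ ^ 2 * φ x) := fun x => by
          rw [Pi.mul_apply, hΦdef, ← ENNReal.ofReal_mul (hφ0 x), mul_comm]
        simp_rw [hpt]
        rw [← ofReal_integral_eq_lintegral_ofReal hAint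
          (ae_of_all _ fun x => mul_nonneg (by positivity) (hφ0 x)), hAdef]
      have hΦν₁ : ∫⁻ x, Φ x ∂ν₁ = ENNReal.ofReal B := by
        rw [hν₁def, lintegral_withDensity_eq_lintegral_mul _ hψm.ennreal_ofReal hΦm]
        have hpt : ∀ x, ((fun x => ENNReal.ofReal (ψ x)) * Φ) x
            = ENNReal.ofReal (2 * ‖x‖ ^ 2 * ψ x) := fun x => by
          rw [Pi.mul_apply, hΦdef, ← ENNReal.ofReal_mul (hψ0 x), mul_comm]
        simp_rw [hpt]
        rw [← ofReal_integral_eq_lintegral_ofReal hBint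
          (ae_of_all _ fun x => mul_nonneg (by positivity) (hψ0 x)), hBdef]
      -- bound the product-part lintegral
      have hprod_le : ∫⁻ p, F p ∂(μ₁.prod ν₁)
          ≤ ENNReal.ofReal s * (ENNReal.ofReal A + ENNReal.ofReal B) := by
        have step1 : ∫⁻ p, F p ∂(μ₁.prod ν₁)
            ≤ ∫⁻ p, (Φ p.1 + Φ p.2) ∂(μ₁.prod ν₁) := by
          refine lintegral_mono fun p => ?_
          rw [hFdef, hΦdef, ← ENNReal.ofReal_add (by positivity) (by positivity)]
          refine ENNReal.ofReal_le_ofReal ?_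
          have h1 : ‖p.1 - p.2‖ ^ 2 ≤ (‖p.1‖ + ‖p.2‖) ^ 2 :=
            pow_le_pow_left₀ (norm_nonneg _) (norm_sub_le p.1 p.2) 2
          nlinarith [sq_nonneg (‖p.1‖ - ‖p.2‖)]
        have step2 : ∫⁻ p, (Φ p.1 + Φ p.2) ∂(μ₁.prod ν₁)
            = (∫⁻ p, Φ p.1 ∂(μ₁.prod ν₁)) + ∫⁻ p, Φ p.2 ∂(μ₁.prod ν₁) :=
          lintegral_add_left (hΦm.comp measurable_fst) _
        have step3 : ∫⁻ p, Φ p.1 ∂(μ₁.prod ν₁) = ENNReal.ofReal s * ENNReal.ofReal A := by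
          rw [← lintegral_map hΦm measurable_fst, Measure.map_fst_prod, hν₁univ,
            lintegral_smul_measure, hΦμ₁, smul_eq_mul]
        have step4 : ∫⁻ p, Φ p.2 ∂(μ₁.prod ν₁) = ENNReal.ofReal s * ENNReal.ofReal B := by
          rw [← lintegral_map hΦm measurable_snd, Measure.map_snd_prod, hμ₁univ,
            lintegral_smul_measure, hΦν₁, smul_eq_mul]
        calc ∫⁻ p, F p ∂(μ₁.prod ν₁) ≤ ∫⁻ p, (Φ p.1 + Φ p.2) ∂(μ₁.prod ν₁) := step1
          _ = ENNReal.ofReal s * ENNReal.ofReal A + ENNReal.ofReal s * ENNReal.ofReal B := by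
              rw [step2, step3, step4]
          _ = ENNReal.ofReal s * (ENNReal.ofReal A + ENNReal.ofReal B) := by ring
      -- total lintegral bound
      have hL : ∫⁻ p, F p ∂γ ≤ ENNReal.ofReal (A + B) := by
        rw [hγdef, lintegral_add_measure, lintegral_smul_measure,
          lintegral_map hFm hdiag]
        have hz : ∫⁻ x, F (x, x) ∂μ₀ = 0 := by
          simp [hFdef]
        rw [hz, zero_add]
        calc c * ∫⁻ p, F p ∂(μ₁.prod ν₁)
            ≤ c * (ENNReal.ofReal s * (ENNReal.ofReal A + ENNReal.ofReal B)) :=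
              mul_le_mul_right hprod_le c
          _ = ENNReal.ofReal (A + B) := by
              rw [hcdef, ← mul_assoc, ENNReal.inv_mul_cancel hsne ENNReal.ofReal_ne_top,
                one_mul, ENNReal.ofReal_add hA0 hB0]
      have hAB : A + B = 2 * ∫ x, ‖x‖ ^ 2 * |f x - g x| := by
        rw [hAdef, hBdef, ← integral_add hAint hBint]
        rw [← integral_const_mul]
        refine integral_congr_ae (ae_of_all _ fun x => ?_)
        dsimp only
        rw [← key x]; ring
      -- convert to the Bochner integral
      have hr : (∫ p, ‖p.1 - p.2‖ ^ 2 ∂γ) = (∫⁻ p, F p ∂γ).toReal := by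
        rw [integral_eq_lintegral_of_nonneg_ae (ae_of_all _ fun p => sq_nonneg _)
          hcont.aestronglyMeasurable]
      rw [hr]
      refine ENNReal.toReal_le_of_le_ofReal (by linarith) ?_
      rw [← hAB]
      exact hL
  -- conclude via the infimum
  obtain ⟨γ, hγ1, hγ2, hγ3, hγ4⟩ := main
  have hbdd : BddBelow {r : ℝ | ∃ γ : Measure (EuclideanSpace ℝ (Fin d) × EuclideanSpace ℝ (Fin d)), IsProbabilityMeasure γ ∧
      γ.map Prod.fst = μ ∧ γ.map Prod.snd = ν ∧ r = ∫ p, ‖p.1 - p.2‖ ^ 2 ∂γ} := by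
    refine ⟨0, fun r hr => ?_⟩
    obtain ⟨γ', -, -, -, hreq⟩ := hr
    rw [hreq]
    exact integral_nonneg fun p => sq_nonneg _
  calc W2sq μ ν ≤ ∫ p, ‖p.1 - p.2‖ ^ 2 ∂γ := csInf_le hbdd ⟨γ, hγ1, hγ2, hγ3, rfl⟩
    _ ≤ 2 * ∫ x, ‖x‖ ^ 2 * |f x - g x| := hγ4
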